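/- For committee elections with disjoint attributes, where C is partitioned into disjoint groups C_1, …, C_z with lower quotas ℓ_r and upper quotas u_r and committee size k, the downward-closed family 𝓕 = {W ⊆ C : W can be extended to a set W'' of size k with ℓ_r ≤ |W'' ∩ C_r| ≤ u_r for each r, and |W ∩ C_r| ≤ u_r for each r} satisfies the matroid exchange property, assuming at least one such size-k set exists. -/

import Mathlib

/-- Downward-closed feasibility for committee elections with disjoint attributes:
`W` respects all upper quotas and can be extended to a size-`k` committee
satisfying all lower and upper quotas. -/

private lemma sum_card_inter {C : Type*} [DecidableEq C] {z : ℕ} (Cg : Fin z → Finset C)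
    (hdisj : ∀ r s, r ≠ s → Disjoint (Cg r) (Cg s))
    (hcover : ∀ x : C, ∃ r, x ∈ Cg r) (W : Finset C) :
    ∑ r, (W ∩ Cg r).card = W.card := by
  classical
  have hd : ∀ r ∈ (Finset.univ : Finset (Fin z)), ∀ s ∈ Finset.univ, r ≠ s →
      Disjoint (W ∩ Cg r) (W ∩ Cg s) := by
    intro r _ s _ hrs
    exact Finset.disjoint_left.mpr fun a ha hb =>
      (Finset.disjoint_left.mp (hdisj r s hrs)) (Finset.mem_inter.mp ha).2
        (Finset.mem_inter.mp hb).2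
  rw [← Finset.card_biUnion hd]
  congr 1
  apply Finset.Subset.antisymm
  · intro x hx
    simp only [Finset.mem_biUnion] at hx
    obtain ⟨r, _, hr⟩ := hx
    exact (Finset.mem_inter.mp hr).1
  · intro x hx
    obtain ⟨r, hr⟩ := hcover x
    exact Finset.mem_biUnion.mpr ⟨r, Finset.mem_univ r, Finset.mem_inter.mpr ⟨hx, hr⟩⟩

private lemma ext_terminal {C : Type*} [DecidableEq C] {z : ℕ} (Cg : Fin z → Finset C)
    (l u : Fin z → ℕ) (k : ℕ)
    (hdisj : ∀ r s, r ≠ s → Disjoint (Cg r) (Cg s))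
    (hcover : ∀ x : C, ∃ r, x ∈ Cg r)
    (W : Finset C) (hkW : k ≤ W.card)
    (hup : ∀ r, (W ∩ Cg r).card ≤ u r)
    (hsum : (∑ r, max (l r) ((W ∩ Cg r).card)) ≤ k) :
    ∃ W'' : Finset C, W ⊆ W'' ∧ W''.card = k ∧
      ∀ r, l r ≤ (W'' ∩ Cg r).card ∧ (W'' ∩ Cg r).card ≤ u r := by
  have hWsum : ∑ r, (W ∩ Cg r).card = W.card := sum_card_inter Cg hdisj hcover W
  have hle : ∀ r ∈ (Finset.univ : Finset (Fin z)),
      (W ∩ Cg r).card ≤ max (l r) ((W ∩ Cg r).card) := fun r _ => le_max_right _ _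
  have h1 : W.card ≤ ∑ r, max (l r) ((W ∩ Cg r).card) := by
    rw [← hWsum]; exact Finset.sum_le_sum hle
  have hWk : W.card = k := by omega
  have heq : ∑ r, (W ∩ Cg r).card = ∑ r, max (l r) ((W ∩ Cg r).card) := by omega
  have hpt := (Finset.sum_eq_sum_iff_of_le hle).mp heq
  refine ⟨W, Finset.Subset.refl W, hWk, fun r => ⟨?_, hup r⟩⟩
  have := hpt r (Finset.mem_univ r)
  omega

/-- counts of `insert c W` when `c ∈ Cg r`, `c ∉ W`. -/
private lemma insert_count {C : Type*} [DecidableEq C] {z : ℕ} (Cg : Fin z → Finset C)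
    (hdisj : ∀ r s, r ≠ s → Disjoint (Cg r) (Cg s))
    (W : Finset C) {c : C} {r : Fin z} (hc : c ∈ Cg r) (hcW : c ∉ W) (s : Fin z) :
    ((insert c W) ∩ Cg s).card = if s = r then (W ∩ Cg s).card + 1 else (W ∩ Cg s).card := by
  by_cases hs : s = r
  · subst hs
    rw [Finset.insert_inter_of_mem hc, if_pos rfl,
      Finset.card_insert_of_notMem (fun h => hcW (Finset.mem_inter.mp h).1)]
  · rw [if_neg hs]
    congr 1
    exact Finset.insert_inter_of_notMem
      (fun h => (Finset.disjoint_left.mp (hdisj s r hs)) h hc)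

private lemma ext_lemma {C : Type*} [DecidableEq C] {z : ℕ} (Cg : Fin z → Finset C)
    (l u : Fin z → ℕ) (k : ℕ)
    (hdisj : ∀ r s, r ≠ s → Disjoint (Cg r) (Cg s))
    (hcover : ∀ x : C, ∃ r, x ∈ Cg r)
    (hlg : ∀ r, l r ≤ (Cg r).card)
    (hlu : ∀ r, l r ≤ u r)
    (hcap : k ≤ ∑ r, min (u r) ((Cg r).card)) :
    ∀ d W, k - W.card ≤ d → (∀ r, (W ∩ Cg r).card ≤ u r) →
      (∑ r, max (l r) ((W ∩ Cg r).card)) ≤ k →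
      ∃ W'' : Finset C, W ⊆ W'' ∧ W''.card = k ∧
        ∀ r, l r ≤ (W'' ∩ Cg r).card ∧ (W'' ∩ Cg r).card ≤ u r := by
  intro d
  induction d with
  | zero =>
    intro W hd hup hsum
    exact ext_terminal Cg l u k hdisj hcover W (by omega) hup hsum
  | succ d ih =>
    intro W hd hup hsum
    by_cases hkW : k ≤ W.card
    · exact ext_terminal Cg l u k hdisj hcover W hkW hup hsum
    push_neg at hkW
    -- find a group r where we can insert an element
    have hmain : ∃ r : Fin z, (W ∩ Cg r).card < (Cg r).card ∧ (W ∩ Cg r).card < u r ∧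
        (∑ s, max (l s) (if s = r then (W ∩ Cg s).card + 1 else (W ∩ Cg s).card)) ≤ k := by
      by_cases hA : ∃ r, (W ∩ Cg r).card < l r
      · obtain ⟨r, hr⟩ := hA
        refine ⟨r, lt_of_lt_of_le hr (hlg r), lt_of_lt_of_le hr (hlu r), ?_⟩
        have : ∀ s ∈ (Finset.univ : Finset (Fin z)),
            max (l s) (if s = r then (W ∩ Cg s).card + 1 else (W ∩ Cg s).card)
              = max (l s) ((W ∩ Cg s).card) := by
          intro s _
          by_cases hs : s = r
          · subst hs; rw [if_pos rfl]; omega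
          · rw [if_neg hs]
        rw [Finset.sum_congr rfl this]
        exact hsum
      · push_neg at hA
        have hWsum : ∑ s, (W ∩ Cg s).card = W.card := sum_card_inter Cg hdisj hcover W
        have hB : ∃ r : Fin z, (W ∩ Cg r).card < min (u r) ((Cg r).card) := by
          by_contra hB
          push_neg at hB
          have : ∑ s, min (u s) ((Cg s).card) ≤ ∑ s, (W ∩ Cg s).card :=
            Finset.sum_le_sum fun s _ => hB s
          omega
        obtain ⟨r, hr⟩ := hB
        refine ⟨r, by omega, by omega, ?_⟩
        have hmx : ∀ s ∈ (Finset.univ : Finset (Fin z)),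
            max (l s) (if s = r then (W ∩ Cg s).card + 1 else (W ∩ Cg s).card)
              = (if s = r then (W ∩ Cg s).card + 1 else (W ∩ Cg s).card) := by
          intro s _
          have h1 := hA s
          by_cases hs : s = r
          · simp only [if_pos hs]; omega
          · simp only [if_neg hs]; omega
        rw [Finset.sum_congr rfl hmx]
        have hsplit : ∀ s ∈ (Finset.univ : Finset (Fin z)),
            (if s = r then (W ∩ Cg s).card + 1 else (W ∩ Cg s).card)
              = (W ∩ Cg s).card + (if s = r then 1 else 0) := by
          intro s _; split <;> omega
        rw [Finset.sum_congr rfl hsplit, Finset.sum_add_distrib, Finset.sum_ite_eq']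
        simp only [Finset.mem_univ, if_pos]
        omega
    obtain ⟨r, hrg, hru, hrsum⟩ := hmain
    have hns : ¬ (Cg r ⊆ W ∩ Cg r) := fun h => absurd (Finset.card_le_card h) (by omega)
    obtain ⟨x, hxg, hxW⟩ := Finset.not_subset.mp hns
    have hxnW : x ∉ W := fun h => hxW (Finset.mem_inter.mpr ⟨h, hxg⟩)
    have hcnt := insert_count Cg hdisj W hxg hxnW
    have hup' : ∀ s, ((insert x W) ∩ Cg s).card ≤ u s := by
      intro s
      rw [hcnt s]
      by_cases hs : s = r
      · subst hs; rw [if_pos rfl]; omega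
      · rw [if_neg hs]; exact hup s
    have hsum' : (∑ s, max (l s) (((insert x W) ∩ Cg s).card)) ≤ k := by
      calc (∑ s, max (l s) (((insert x W) ∩ Cg s).card))
          = ∑ s, max (l s) (if s = r then (W ∩ Cg s).card + 1 else (W ∩ Cg s).card) :=
            Finset.sum_congr rfl fun s _ => by rw [hcnt s]
        _ ≤ k := hrsum
    have hcard : (insert x W).card = W.card + 1 := Finset.card_insert_of_notMem hxnW
    obtain ⟨W'', h1, h2, h3⟩ := ih (insert x W) (by omega) hup' hsum'
    exact ⟨W'', (Finset.subset_insert x W).trans h1, h2, h3⟩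

private lemma bump_sum {z : ℕ} (l n : Fin z → ℕ) (r : Fin z) :
    (∑ s, max (l s) (if s = r then n s + 1 else n s)) + max (l r) (n r)
      = (∑ s, max (l s) (n s)) + max (l r) (n r + 1) := by
  rw [Finset.sum_eq_sum_sdiff_singleton_add (Finset.mem_univ r)
      (fun s => max (l s) (if s = r then n s + 1 else n s)),
    Finset.sum_eq_sum_sdiff_singleton_add (Finset.mem_univ r) (fun s => max (l s) (n s))]
  have heq : ∑ s ∈ Finset.univ \ {r}, max (l s) (if s = r then n s + 1 else n s)
      = ∑ s ∈ Finset.univ \ {r}, max (l s) (n s) := by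
    refine Finset.sum_congr rfl fun s hs => ?_
    rw [if_neg (fun h => (Finset.mem_sdiff.mp hs).2 (Finset.mem_singleton.mpr h))]
  rw [heq, if_pos rfl]
  ring

theorem stmt3' {C : Type*} [DecidableEq C] {z : ℕ} (Cg : Fin z → Finset C)
    (l u : Fin z → ℕ) (k : ℕ)
    (hdisj : ∀ r s, r ≠ s → Disjoint (Cg r) (Cg s))
    (hcover : ∀ x : C, ∃ r, x ∈ Cg r)
    (hlu : ∀ r, l r ≤ u r)
    (hexists : ∃ W0 : Finset C, W0.card = k ∧
      ∀ r, l r ≤ (W0 ∩ Cg r).card ∧ (W0 ∩ Cg r).card ≤ u r)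
    (X Y : Finset C)
    (hXu : ∀ r, (X ∩ Cg r).card ≤ u r)
    (hXe : ∃ W'' : Finset C, X ⊆ W'' ∧ W''.card = k ∧
      ∀ r, l r ≤ (W'' ∩ Cg r).card ∧ (W'' ∩ Cg r).card ≤ u r)
    (hYu : ∀ r, (Y ∩ Cg r).card ≤ u r)
    (hYe : ∃ W'' : Finset C, Y ⊆ W'' ∧ W''.card = k ∧
      ∀ r, l r ≤ (W'' ∩ Cg r).card ∧ (W'' ∩ Cg r).card ≤ u r)
    (hlt : X.card < Y.card) :
    ∃ c ∈ Y \ X, (∀ r, ((insert c X) ∩ Cg r).card ≤ u r) ∧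
      ∃ W'' : Finset C, insert c X ⊆ W'' ∧ W''.card = k ∧
        ∀ r, l r ≤ (W'' ∩ Cg r).card ∧ (W'' ∩ Cg r).card ≤ u r := by
  obtain ⟨X'', hXX, hXk, hXq⟩ := hXe
  obtain ⟨Y'', hYY, hYk, hYq⟩ := hYe
  obtain ⟨W0, hW0k, hW0⟩ := hexists
  have hlg : ∀ r, l r ≤ (Cg r).card := fun r =>
    (hW0 r).1.trans (Finset.card_le_card Finset.inter_subset_right)
  have hcap : k ≤ ∑ r, min (u r) ((Cg r).card) := by
    calc k = ∑ r, (W0 ∩ Cg r).card := by rw [sum_card_inter Cg hdisj hcover W0, hW0k]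
      _ ≤ ∑ r, min (u r) ((Cg r).card) := Finset.sum_le_sum fun r _ =>
          le_min (hW0 r).2 (Finset.card_le_card Finset.inter_subset_right)
  have hTX : ∑ s, max (l s) ((X ∩ Cg s).card) ≤ k := by
    calc ∑ s, max (l s) ((X ∩ Cg s).card) ≤ ∑ s, (X'' ∩ Cg s).card :=
        Finset.sum_le_sum fun s _ => max_le (hXq s).1
          (Finset.card_le_card (Finset.inter_subset_inter hXX (Finset.Subset.refl _)))
      _ = k := by rw [sum_card_inter Cg hdisj hcover X'', hXk]
  have hTY : ∑ s, max (l s) ((Y ∩ Cg s).card) ≤ k := by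
    calc ∑ s, max (l s) ((Y ∩ Cg s).card) ≤ ∑ s, (Y'' ∩ Cg s).card :=
        Finset.sum_le_sum fun s _ => max_le (hYq s).1
          (Finset.card_le_card (Finset.inter_subset_inter hYY (Finset.Subset.refl _)))
      _ = k := by rw [sum_card_inter Cg hdisj hcover Y'', hYk]
  have hnm : ∑ s, (X ∩ Cg s).card < ∑ s, (Y ∩ Cg s).card := by
    rw [sum_card_inter Cg hdisj hcover X, sum_card_inter Cg hdisj hcover Y]; exact hlt
  have hmain : ∃ r, (X ∩ Cg r).card < (Y ∩ Cg r).card ∧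
      (∑ s, max (l s) (if s = r then (X ∩ Cg s).card + 1 else (X ∩ Cg s).card)) ≤ k := by
    by_cases hA : ∃ r, (X ∩ Cg r).card < (Y ∩ Cg r).card ∧ (X ∩ Cg r).card < l r
    · obtain ⟨r, h1, h2⟩ := hA
      refine ⟨r, h1, ?_⟩
      have hb := bump_sum l (fun s => (X ∩ Cg s).card) r
      have hm : max (l r) ((X ∩ Cg r).card + 1) = max (l r) ((X ∩ Cg r).card) := by omega
      omega
    · push_neg at hA
      by_cases hB : ∑ s, max (l s) ((X ∩ Cg s).card) < k
      · have hr : ∃ r, (X ∩ Cg r).card < (Y ∩ Cg r).card := by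
          by_contra h
          push_neg at h
          have := Finset.sum_le_sum fun s (_ : s ∈ Finset.univ) => h s
          omega
        obtain ⟨r, h1⟩ := hr
        refine ⟨r, h1, ?_⟩
        have hb := bump_sum l (fun s => (X ∩ Cg s).card) r
        have hm : max (l r) ((X ∩ Cg r).card + 1) ≤ max (l r) ((X ∩ Cg r).card) + 1 := by omega
        omega
      · exfalso
        have hpt : ∀ s ∈ (Finset.univ : Finset (Fin z)),
            max (l s) ((X ∩ Cg s).card) + (Y ∩ Cg s).card
              ≤ max (l s) ((Y ∩ Cg s).card) + (X ∩ Cg s).card := by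
          intro s _
          rcases lt_or_ge ((X ∩ Cg s).card) ((Y ∩ Cg s).card) with h | h
          · have := hA s h; omega
          · omega
        have hsle := Finset.sum_le_sum hpt
        rw [Finset.sum_add_distrib, Finset.sum_add_distrib] at hsle
        omega
  obtain ⟨r, hnmr, hsum'⟩ := hmain
  have hns : ¬ (Y ∩ Cg r ⊆ X ∩ Cg r) := fun h => absurd (Finset.card_le_card h) (by omega)
  obtain ⟨c, hcY, hcX⟩ := Finset.not_subset.mp hns
  have hcYm := (Finset.mem_inter.mp hcY).1
  have hcg := (Finset.mem_inter.mp hcY).2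
  have hcnX : c ∉ X := fun h => hcX (Finset.mem_inter.mpr ⟨h, hcg⟩)
  have hcnt := insert_count Cg hdisj X hcg hcnX
  have hup' : ∀ s, ((insert c X) ∩ Cg s).card ≤ u s := by
    intro s
    rw [hcnt s]
    by_cases hs : s = r
    · subst hs; rw [if_pos rfl]; have := hYu s; omega
    · rw [if_neg hs]; exact hXu s
  refine ⟨c, Finset.mem_sdiff.mpr ⟨hcYm, hcnX⟩, hup', ?_⟩
  apply ext_lemma Cg l u k hdisj hcover hlg hlu hcap k (insert c X) (by omega) hup'
  calc (∑ s, max (l s) (((insert c X) ∩ Cg s).card))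
      = ∑ s, max (l s) (if s = r then (X ∩ Cg s).card + 1 else (X ∩ Cg s).card) :=
        Finset.sum_congr rfl fun s _ => by rw [hcnt s]
    _ ≤ k := hsum'

def Feas3 {C : Type*} [DecidableEq C] {z : ℕ} (Cg : Fin z → Finset C)
    (l u : Fin z → ℕ) (k : ℕ) (W : Finset C) : Prop :=
  (∀ r, (W ∩ Cg r).card ≤ u r) ∧
  ∃ W'' : Finset C, W ⊆ W'' ∧ W''.card = k ∧
    ∀ r, l r ≤ (W'' ∩ Cg r).card ∧ (W'' ∩ Cg r).card ≤ u r

/-- Committee elections with disjoint attributes satisfy the matroid exchange property. -/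
theorem stmt3 {C : Type*} [DecidableEq C] {z : ℕ} (Cg : Fin z → Finset C)
    (l u : Fin z → ℕ) (k : ℕ)
    (hdisj : ∀ r s, r ≠ s → Disjoint (Cg r) (Cg s))
    (hcover : ∀ x : C, ∃ r, x ∈ Cg r)
    (hlu : ∀ r, l r ≤ u r)
    (hexists : ∃ W0 : Finset C, W0.card = k ∧
      ∀ r, l r ≤ (W0 ∩ Cg r).card ∧ (W0 ∩ Cg r).card ≤ u r)
    (X Y : Finset C) (hX : Feas3 Cg l u k X) (hY : Feas3 Cg l u k Y)
    (hlt : X.card < Y.card) :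
    ∃ c ∈ Y \ X, Feas3 Cg l u k (insert c X) := by
  obtain ⟨c, hc, h1, h2⟩ := stmt3' Cg l u k hdisj hcover hlu hexists X Y
    hX.1 hX.2 hY.1 hY.2 hlt
  exact ⟨c, hc, h1, h2⟩
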